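/- arXiv:1304.0749 — 3 statements merged into one kernel-verified Lean document; each statement's English description precedes it below -/
import Mathlib

section
/- Let C_• be a paracyclic k-module over a field k of characteristic zero, with simplicial boundary b_n = Σ_{i=0}^{n} (−1)ⁱ d_{n,i}, norm operator N_n = Σ_{i=0}^{n} tⁱ_n, extra degeneracy s_n = (−1)^{n+1} t_{n+1} s_{n,n}, Connes–Tsygan boundary B_n = (id − t_{n+1}) s_n N_n, and T_n = t_n^{n+1}. Then for every n, b_{n+1} B_n + B_{n−1} b_n = id − T_n on C_n. -/
/-!
A *paracyclic `k`-module* is a simplicial `k`-module `C_• = ⊕_{n∈ℕ} C_n` together with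
operators `t_n : C_n → C_n` satisfying the paracyclic identities.  Here the face maps
`d_{n,i} : C_n → C_{n-1}` (for `n ≥ 1`, `0 ≤ i ≤ n`) are encoded as `d (n-1) i : C (n-1+1) →ₗ C (n-1)`,
and similarly for the degeneracies; the index `i` ranges over `ℕ`, with the simplicial and
paracyclic identities imposed only in the meaningful range (values outside the range are junk).
-/
structure Paracyclic (k : Type) [Field k] where
  /-- the underlying graded `k`-module -/
  C : ℕ → Type
  [acg : ∀ n, AddCommGroup (C n)]
  [mod : ∀ n, Module k (C n)]
  /-- face maps: `d n i : C (n+1) →ₗ C n` encodes `d_{n+1,i}` for `0 ≤ i ≤ n+1` -/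
  d : (n : ℕ) → ℕ → (C (n + 1) →ₗ[k] C n)
  /-- degeneracies: `s n i : C n →ₗ C (n+1)` encodes `s_{n,i}` for `0 ≤ i ≤ n` -/
  s : (n : ℕ) → ℕ → (C n →ₗ[k] C (n + 1))
  /-- cyclic operators -/
  t : (n : ℕ) → (C n →ₗ[k] C n)
  -- simplicial identities:
  d_d : ∀ n i j, i ≤ j → j ≤ n + 1 →
    (d n i).comp (d (n + 1) (j + 1)) = (d n j).comp (d (n + 1) i)
  s_s : ∀ n i j, i ≤ j → j ≤ n →
    (s (n + 1) i).comp (s n j) = (s (n + 1) (j + 1)).comp (s n i)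
  d_s_le : ∀ n i j, i ≤ j → j ≤ n →
    (d (n + 1) i).comp (s (n + 1) (j + 1)) = (s n j).comp (d n i)
  d_s_self : ∀ n i, i ≤ n → (d n i).comp (s n i) = LinearMap.id
  d_s_succ : ∀ n i, i ≤ n → (d n (i + 1)).comp (s n i) = LinearMap.id
  d_s_gt : ∀ n i j, j ≤ i → i ≤ n →
    (d (n + 1) (i + 2)).comp (s (n + 1) j) = (s n j).comp (d n (i + 1))
  -- paracyclic identities:
  d_t : ∀ n i, i ≤ n → (d n (i + 1)).comp (t (n + 1)) = -((t n).comp (d n i))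
  d_t_zero : ∀ n, (d n 0).comp (t (n + 1)) = ((-1 : k) ^ (n + 1)) • d n (n + 1)
  s_t : ∀ n i, i + 1 ≤ n → (s n (i + 1)).comp (t n) = -((t (n + 1)).comp (s n i))
  s_t_zero : ∀ n, (s n 0).comp (t n) =
    ((-1 : k) ^ n) • ((t (n + 1)).comp ((t (n + 1)).comp (s n n)))

attribute [instance] Paracyclic.acg Paracyclic.mod

namespace Paracyclic

variable {k : Type} [Field k] (P : Paracyclic k)

/-- the simplicial boundary `b_{n+1} : C_{n+1} → C_n` -/
noncomputable def b (n : ℕ) : P.C (n + 1) →ₗ[k] P.C n :=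
  ∑ i ∈ Finset.range (n + 2), ((-1 : k) ^ i) • P.d n i

/-- the acyclic boundary `b'_{n+1} : C_{n+1} → C_n` -/
noncomputable def b' (n : ℕ) : P.C (n + 1) →ₗ[k] P.C n :=
  ∑ i ∈ Finset.range (n + 1), ((-1 : k) ^ i) • P.d n i

/-- the norm operator `N_n = Σ_{i=0}^n t_n^i` -/
noncomputable def Nrm (n : ℕ) : P.C n →ₗ[k] P.C n :=
  ∑ i ∈ Finset.range (n + 1), (P.t n) ^ i

/-- the extra degeneracy `s_n = (-1)^{n+1} t_{n+1} s_{n,n}` -/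
noncomputable def sextra (n : ℕ) : P.C n →ₗ[k] P.C (n + 1) :=
  ((-1 : k) ^ (n + 1)) • ((P.t (n + 1)).comp (P.s n n))

/-- the Connes-Tsygan boundary `B_n = (id - t_{n+1}) s_n N_n` -/
noncomputable def Bct (n : ℕ) : P.C n →ₗ[k] P.C (n + 1) :=
  (LinearMap.id - P.t (n + 1)).comp ((P.sextra n).comp (P.Nrm n))

/-- the operator `T_n = t_n^{n+1}` -/
noncomputable def T (n : ℕ) : P.C n →ₗ[k] P.C n := (P.t n) ^ (n + 1)

end Paracyclic



lemma npc {k : Type} [Field k] (p q : ℕ) (h : p % 2 = q % 2) : (-1:k)^p = (-1:k)^q := by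
  conv_lhs => rw [← Nat.div_add_mod p 2]
  conv_rhs => rw [← Nat.div_add_mod q 2]
  rw [h, pow_add, pow_add, pow_mul, pow_mul, neg_one_sq, one_pow, one_pow]

namespace Paracyclic

variable {k : Type} [Field k] (P : Paracyclic k)

lemma sumcomp {ι : Type} (s : Finset ι) {n m p : ℕ} (f : ι → (P.C m →ₗ[k] P.C p))
    (g : P.C n →ₗ[k] P.C m) :
    (∑ i ∈ s, f i).comp g = ∑ i ∈ s, (f i).comp g := by
  ext x; simp [LinearMap.sum_apply]

lemma compsum {ι : Type} (s : Finset ι) {n m p : ℕ} (g : P.C m →ₗ[k] P.C p)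
    (f : ι → (P.C n →ₗ[k] P.C m)) :
    g.comp (∑ i ∈ s, f i) = ∑ i ∈ s, g.comp (f i) := by
  ext x; simp [LinearMap.sum_apply, map_sum]

lemma dtpow (n m j : ℕ) (h : j + m ≤ n + 1) :
    (P.d n (j + m)).comp ((P.t (n+1))^j)
      = ((-1:k)^j) • (((P.t n)^j).comp (P.d n m)) := by
  induction j with
  | zero => simp [Module.End.one_eq_id]
  | succ j ih =>
    have h' : j + m ≤ n + 1 := by omega
    have h2 : j + m ≤ n := by omega
    have e : j + 1 + m = (j + m) + 1 := by omega
    rw [e, pow_succ', Module.End.mul_eq_comp, ← LinearMap.comp_assoc,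
      P.d_t n (j + m) h2, LinearMap.neg_comp, LinearMap.comp_assoc, ih h',
      LinearMap.comp_smul, ← LinearMap.comp_assoc, ← Module.End.mul_eq_comp,
      ← pow_succ']
    rw [pow_succ (-1:k), mul_neg_one, neg_smul]

lemma dtpow2 (n i a : ℕ) (ha : a ≤ n + 1) (hi : i ≤ n) :
    (P.d n i).comp ((P.t (n+1))^(i+1+a))
      = ((-1:k)^(i+n+1+a)) • (((P.t n)^(i+a)).comp (P.d n (n+1-a))) := by
  have e0 : i + 1 + a = (i + 1) + a := by omega
  rw [e0, pow_add, Module.End.mul_eq_comp, ← LinearMap.comp_assoc]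
  have step1 : (P.d n i).comp ((P.t (n+1))^(i+1))
      = ((-1:k)^(i+n+1)) • (((P.t n)^i).comp (P.d n (n+1))) := by
    have e1 : (P.t (n+1))^(i+1) = (P.t (n+1))^i * P.t (n+1) := pow_succ _ _
    have e2 : (P.d n i) = P.d n (i + 0) := by norm_num
    rw [e1, Module.End.mul_eq_comp, ← LinearMap.comp_assoc, e2,
      P.dtpow n 0 i (by omega), LinearMap.smul_comp, LinearMap.comp_assoc,
      P.d_t_zero n, LinearMap.comp_smul, smul_smul, ← pow_add, ← add_assoc]
  rw [step1, LinearMap.smul_comp, LinearMap.comp_assoc]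
  have e3 : P.d n (n+1) = P.d n (a + (n+1-a)) := by congr 1; omega
  rw [e3, P.dtpow n (n+1-a) a (by omega), LinearMap.comp_smul, smul_smul,
    ← pow_add, ← LinearMap.comp_assoc, ← Module.End.mul_eq_comp, ← pow_add]

lemma b_eq (n : ℕ) : P.b n = P.b' n + ((-1:k)^(n+1)) • P.d n (n+1) := by
  unfold b b'
  rw [Finset.sum_range_succ]

lemma bt (n : ℕ) : (P.b n).comp (P.t (n+1))
    = ((-1:k)^(n+1)) • P.d n (n+1) + (P.t n).comp (P.b' n) := by
  unfold b
  rw [P.sumcomp, Finset.sum_range_succ']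
  have h1 : (((-1:k)^0) • P.d n 0).comp (P.t (n+1)) = ((-1:k)^(n+1)) • P.d n (n+1) := by
    rw [pow_zero, one_smul, P.d_t_zero]
  have h2 : ∑ i ∈ Finset.range (n+1), (((-1:k)^(i+1)) • P.d n (i+1)).comp (P.t (n+1))
      = (P.t n).comp (P.b' n) := by
    unfold b'
    rw [P.compsum]
    apply Finset.sum_congr rfl
    intro i hi
    rw [Finset.mem_range] at hi
    rw [LinearMap.smul_comp, P.d_t n i (by omega), LinearMap.comp_smul,
      smul_neg, pow_succ, mul_neg_one, neg_smul, neg_neg]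
  rw [h1, h2]
  exact add_comm _ _

lemma lem1 (n : ℕ) : (P.b n).comp (LinearMap.id - P.t (n+1))
    = (LinearMap.id - P.t n).comp (P.b' n) := by
  rw [LinearMap.comp_sub, LinearMap.sub_comp, LinearMap.comp_id, LinearMap.id_comp,
    P.bt, P.b_eq]
  abel

lemma NT (m : ℕ) : (LinearMap.id - P.t m).comp (P.Nrm m) = LinearMap.id - P.T m := by
  unfold Nrm T
  rw [← Module.End.one_eq_id, ← Module.End.mul_eq_comp, ← neg_sub (P.t m) 1,
    neg_mul, mul_geom_sum, neg_sub]

end Paracyclic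

namespace Paracyclic

variable {k : Type} [Field k] (P : Paracyclic k)

lemma hA (n : ℕ) :
    ∑ i ∈ Finset.range (n+1), ∑ j ∈ Finset.range (i+1),
        ((-1:k)^i) • ((P.d n i).comp ((P.t (n+1))^j))
      = ∑ j ∈ Finset.range (n+1), ∑ i ∈ Finset.range (n+1-j),
        ((-1:k)^i) • (((P.t n)^j).comp (P.d n i)) := by
  rw [Finset.sum_sigma', Finset.sum_sigma']
  refine Finset.sum_nbij' (fun p => ⟨p.2, p.1 - p.2⟩) (fun q => ⟨q.2 + q.1, q.1⟩)
    ?_ ?_ ?_ ?_ ?_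
  · rintro ⟨i, j⟩ hm
    simp only [Finset.mem_sigma, Finset.mem_range] at *
    omega
  · rintro ⟨j, i⟩ hm
    simp only [Finset.mem_sigma, Finset.mem_range] at *
    omega
  · rintro ⟨i, j⟩ hm
    simp only [Finset.mem_sigma, Finset.mem_range] at hm
    have h1 : i - j + j = i := by omega
    simp only [h1]
  · rintro ⟨j, i⟩ hm
    simp only [Finset.mem_sigma, Finset.mem_range] at hm
    have h1 : i + j - j = i := by omega
    simp only [h1]
  · rintro ⟨i, j⟩ hm
    simp only [Finset.mem_sigma, Finset.mem_range] at hm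
    obtain ⟨m, rfl⟩ : ∃ m, i = j + m := ⟨i - j, by omega⟩
    simp only [Nat.add_sub_cancel_left]
    rw [P.dtpow n m j (by omega), smul_smul, ← pow_add, npc (j + m + j) m (by omega)]

lemma hB (n : ℕ) :
    ∑ i ∈ Finset.range (n+1), ∑ j ∈ Finset.Ico (i+1) (n+2),
        ((-1:k)^i) • ((P.d n i).comp ((P.t (n+1))^j))
      = ∑ j ∈ Finset.range (n+1), ∑ i ∈ Finset.Ico (n+1-j) (n+2),
        ((-1:k)^i) • (((P.t n)^j).comp (P.d n i)) := by
  rw [Finset.sum_sigma', Finset.sum_sigma']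
  refine Finset.sum_nbij' (fun p => ⟨p.2 - 1, n + 2 + p.1 - p.2⟩)
    (fun q => ⟨q.2 + q.1 - (n+1), q.1 + 1⟩) ?_ ?_ ?_ ?_ ?_
  · rintro ⟨i, j⟩ hm
    simp only [Finset.mem_sigma, Finset.mem_range, Finset.mem_Ico] at *
    omega
  · rintro ⟨j, i⟩ hm
    simp only [Finset.mem_sigma, Finset.mem_range, Finset.mem_Ico] at *
    omega
  · rintro ⟨i, j⟩ hm
    simp only [Finset.mem_sigma, Finset.mem_range, Finset.mem_Ico] at hm
    have h1 : n + 2 + i - j + (j - 1) - (n + 1) = i := by omega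
    have h2 : j - 1 + 1 = j := by omega
    simp only [h1, h2]
  · rintro ⟨j, i⟩ hm
    simp only [Finset.mem_sigma, Finset.mem_range, Finset.mem_Ico] at hm
    have h1 : j + 1 - 1 = j := by omega
    have h2 : n + 2 + (i + j - (n + 1)) - (j + 1) = i := by omega
    simp only [h1, h2]
  · rintro ⟨i, j⟩ hm
    simp only [Finset.mem_sigma, Finset.mem_range, Finset.mem_Ico] at hm
    obtain ⟨a, rfl⟩ : ∃ a, j = i + 1 + a := ⟨j - i - 1, by omega⟩
    have h1 : i + 1 + a - 1 = i + a := by omega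
    have h2 : n + 2 + i - (i + 1 + a) = n + 1 - a := by omega
    simp only [h1, h2]
    rw [P.dtpow2 n i a (by omega) (by omega), smul_smul, ← pow_add,
      npc (i + (i + n + 1 + a)) (n + 1 - a) (by omega)]

end Paracyclic

namespace Paracyclic

variable {k : Type} [Field k] (P : Paracyclic k)

lemma lem2core (n : ℕ) :
    ∑ i ∈ Finset.range (n+1), ∑ j ∈ Finset.range (n+2),
        ((-1:k)^i) • ((P.d n i).comp ((P.t (n+1))^j))
      = ∑ j ∈ Finset.range (n+1), ∑ i ∈ Finset.range (n+2),
        ((-1:k)^i) • (((P.t n)^j).comp (P.d n i)) := by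
  have L : ∑ i ∈ Finset.range (n+1), ∑ j ∈ Finset.range (n+2),
        ((-1:k)^i) • ((P.d n i).comp ((P.t (n+1))^j))
      = ∑ i ∈ Finset.range (n+1), ((∑ j ∈ Finset.range (i+1),
          ((-1:k)^i) • ((P.d n i).comp ((P.t (n+1))^j)))
        + ∑ j ∈ Finset.Ico (i+1) (n+2),
          ((-1:k)^i) • ((P.d n i).comp ((P.t (n+1))^j))) := by
    apply Finset.sum_congr rfl
    intro i hi
    rw [Finset.mem_range] at hi
    simp only [Finset.range_eq_Ico]
    exact (Finset.sum_Ico_consecutive _ (by omega) (by omega)).symm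
  have R : ∑ j ∈ Finset.range (n+1), ∑ i ∈ Finset.range (n+2),
        ((-1:k)^i) • (((P.t n)^j).comp (P.d n i))
      = ∑ j ∈ Finset.range (n+1), ((∑ i ∈ Finset.range (n+1-j),
          ((-1:k)^i) • (((P.t n)^j).comp (P.d n i)))
        + ∑ i ∈ Finset.Ico (n+1-j) (n+2),
          ((-1:k)^i) • (((P.t n)^j).comp (P.d n i))) := by
    apply Finset.sum_congr rfl
    intro j hj
    rw [Finset.mem_range] at hj
    simp only [Finset.range_eq_Ico]
    exact (Finset.sum_Ico_consecutive _ (by omega) (by omega)).symm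
  rw [L, R, Finset.sum_add_distrib, Finset.sum_add_distrib, P.hA, P.hB]

lemma lem2 (n : ℕ) : (P.b' n).comp (P.Nrm (n+1)) = (P.Nrm n).comp (P.b n) := by
  have eL : (P.b' n).comp (P.Nrm (n+1))
      = ∑ i ∈ Finset.range (n+1), ∑ j ∈ Finset.range (n+2),
          ((-1:k)^i) • ((P.d n i).comp ((P.t (n+1))^j)) := by
    unfold b' Nrm
    rw [P.sumcomp]
    apply Finset.sum_congr rfl
    intro i _
    rw [LinearMap.smul_comp, P.compsum, Finset.smul_sum]
  have eR : (P.Nrm n).comp (P.b n)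
      = ∑ j ∈ Finset.range (n+1), ∑ i ∈ Finset.range (n+2),
          ((-1:k)^i) • (((P.t n)^j).comp (P.d n i)) := by
    unfold Nrm b
    rw [P.sumcomp]
    apply Finset.sum_congr rfl
    intro j _
    rw [P.compsum]
    apply Finset.sum_congr rfl
    intro i _
    rw [LinearMap.comp_smul]
  rw [eL, eR, P.lem2core]

lemma h0 : (P.b' 0).comp (P.sextra 0) = LinearMap.id := by
  unfold b' sextra
  rw [Finset.sum_range_one, pow_zero, one_smul, LinearMap.comp_smul,
    ← LinearMap.comp_assoc, P.d_t_zero 0, LinearMap.smul_comp, smul_smul,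
    P.d_s_succ 0 0 le_rfl]
  norm_num

lemma hsucc (n : ℕ) :
    (P.b' (n+1)).comp (P.sextra (n+1)) + (P.sextra n).comp (P.b' n) = LinearMap.id := by
  have T0 : (((-1:k)^0) • P.d (n+1) 0).comp (P.sextra (n+1)) = LinearMap.id := by
    unfold sextra
    rw [pow_zero, one_smul, LinearMap.comp_smul, ← LinearMap.comp_assoc,
      P.d_t_zero (n+1), LinearMap.smul_comp, smul_smul, ← pow_add,
      P.d_s_succ (n+1) (n+1) le_rfl, npc (n+1+1+(n+1+1)) 0 (by omega), pow_zero, one_smul]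
  have key : ∀ j ∈ Finset.range (n+1),
      (((-1:k)^(j+1)) • P.d (n+1) (j+1)).comp (P.sextra (n+1))
        = -((P.sextra n).comp (((-1:k)^j) • P.d n j)) := by
    intro j hj
    rw [Finset.mem_range] at hj
    unfold sextra
    simp only [LinearMap.smul_comp, LinearMap.comp_smul, smul_smul, LinearMap.comp_assoc]
    rw [← LinearMap.comp_assoc, P.d_t (n+1) j (by omega), LinearMap.neg_comp,
      LinearMap.comp_assoc, P.d_s_le n j n (by omega) le_rfl, smul_neg, ← smul_neg, ← neg_smul]
    rw [smul_neg, ← neg_smul, ← pow_add, ← pow_add,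
      npc (n+1+1+(j+1)) (j+(n+1)) (by omega)]
  have step : (P.b' (n+1)).comp (P.sextra (n+1))
      = (∑ j ∈ Finset.range (n+1),
          -((P.sextra n).comp (((-1:k)^j) • P.d n j))) + LinearMap.id := by
    unfold b'
    rw [P.sumcomp, Finset.sum_range_succ', T0]
    congr 1
    exact Finset.sum_congr rfl key
  rw [step]
  have e2 : (P.sextra n).comp (P.b' n)
      = ∑ j ∈ Finset.range (n+1), (P.sextra n).comp (((-1:k)^j) • P.d n j) := by
    unfold b'
    rw [P.compsum]
  rw [e2, add_right_comm, ← Finset.sum_add_distrib]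
  simp

end Paracyclic

/-- For every paracyclic `k`-module (`k` a field of characteristic zero)
one has `b_{n+1} B_n + B_{n-1} b_n = id - T_n` on `C_n` for every `n`
(in degree `0` the second summand is absent, as `b_0 = 0`). -/
theorem connes_tsygan_homotopy_formula (k : Type) [Field k] [CharZero k] (P : Paracyclic k) :
    ((P.b 0).comp (P.Bct 0) = LinearMap.id - P.T 0) ∧
      ∀ n : ℕ, (P.b (n + 1)).comp (P.Bct (n + 1)) + (P.Bct n).comp (P.b n) =
        LinearMap.id - P.T (n + 1) := by
  constructor
  · unfold Paracyclic.Bct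
    rw [← LinearMap.comp_assoc, P.lem1 0, LinearMap.comp_assoc,
      ← LinearMap.comp_assoc (P.Nrm 0) (P.sextra 0) (P.b' 0), P.h0,
      LinearMap.id_comp, P.NT 0]
  · intro n
    have e1 : (P.b (n+1)).comp (P.Bct (n+1))
        = (LinearMap.id - P.t (n+1)).comp
            (((P.b' (n+1)).comp (P.sextra (n+1))).comp (P.Nrm (n+1))) := by
      unfold Paracyclic.Bct
      rw [← LinearMap.comp_assoc, P.lem1 (n+1), LinearMap.comp_assoc,
        ← LinearMap.comp_assoc (P.Nrm (n+1)) (P.sextra (n+1)) (P.b' (n+1))]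
    have e2 : (P.Bct n).comp (P.b n)
        = (LinearMap.id - P.t (n+1)).comp
            (((P.sextra n).comp (P.b' n)).comp (P.Nrm (n+1))) := by
      unfold Paracyclic.Bct
      rw [LinearMap.comp_assoc, LinearMap.comp_assoc, ← P.lem2 n,
        ← LinearMap.comp_assoc (P.Nrm (n+1)) (P.b' n) (P.sextra n)]
    rw [e1, e2, ← LinearMap.comp_add, ← LinearMap.add_comp, P.hsucc n,
      LinearMap.id_comp, P.NT (n+1)]
end

section
/- Let C_• be a paracyclic k-module over a field k of characteristic zero, with b_n, N_n, extra degeneracy s_n, Connes–Tsygan boundary B_n, and T_n = t_n^{n+1} as usual. Then for every n, B_{n+1} B_n = (id − T_{n+2})(id − t_{n+2}) s_{n+1} s_n N_n on C_n. -/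
namespace ParacyclicAux

open LinearMap

variable {k : Type} [Field k] (P : Paracyclic k)

lemma nrm_comp_sub (n : ℕ) :
    (P.Nrm n).comp (LinearMap.id - P.t n) = LinearMap.id - P.T n := by
  have h := geom_sum_mul (P.t n) (n + 1)
  have : (P.Nrm n) * (LinearMap.id - P.t n) = LinearMap.id - P.T n := by
    have hi : (LinearMap.id : P.C n →ₗ[k] P.C n) = 1 := rfl
    rw [hi]
    calc P.Nrm n * (1 - P.t n) = -(P.Nrm n * (P.t n - 1)) := by
          rw [← mul_neg, neg_sub]
      _ = -(P.t n ^ (n + 1) - 1) := by rw [Paracyclic.Nrm, h]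
      _ = 1 - P.T n := by rw [neg_sub, Paracyclic.T]
  simpa [Module.End.mul_eq_comp] using this

lemma s_n_pow (n : ℕ) : ∀ j i : ℕ, i + j = n →
    (P.s n n).comp ((P.t n) ^ j) =
      ((-1 : k) ^ j) • (((P.t (n + 1)) ^ j).comp (P.s n i)) := by
  intro j
  induction j with
  | zero =>
      intro i hi
      simp only [Nat.add_zero] at hi
      subst hi
      simp [pow_zero, Module.End.one_eq_id]
  | succ j ih =>
      intro i hi
      have h1 : (i + 1) + j = n := by omega
      have h2 := ih (i + 1) h1
      have hst : (P.s n (i + 1)).comp (P.t n) = -((P.t (n + 1)).comp (P.s n i)) :=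
        P.s_t n i (by omega)
      have hp : (P.t n) ^ (j + 1) = ((P.t n) ^ j).comp (P.t n) := by
        rw [pow_succ, Module.End.mul_eq_comp]
      have hp2 : (P.t (n + 1)) ^ (j + 1) = ((P.t (n + 1)) ^ j).comp (P.t (n + 1)) := by
        rw [pow_succ, Module.End.mul_eq_comp]
      calc (P.s n n).comp ((P.t n) ^ (j + 1))
          = ((P.s n n).comp ((P.t n) ^ j)).comp (P.t n) := by
            rw [hp, LinearMap.comp_assoc]
        _ = ((-1 : k) ^ j) • ((((P.t (n + 1)) ^ j).comp (P.s n (i + 1))).comp (P.t n)) := by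
            rw [h2, LinearMap.smul_comp]
        _ = ((-1 : k) ^ j) • (((P.t (n + 1)) ^ j).comp ((P.s n (i + 1)).comp (P.t n))) := by
            rw [LinearMap.comp_assoc]
        _ = ((-1 : k) ^ (j + 1)) • (((P.t (n + 1)) ^ (j + 1)).comp (P.s n i)) := by
            rw [hst, hp2, LinearMap.comp_assoc]
            rw [LinearMap.comp_neg]
            rw [pow_succ]
            rw [smul_neg, mul_comm, ← smul_smul]
            norm_num

lemma s_nn_T (n : ℕ) :
    (P.s n n).comp (P.T n) =
      (((P.t (n + 1)) ^ (n + 2)).comp (P.s n n)) := by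
  have h := s_n_pow P n n 0 (by omega)
  have hz := P.s_t_zero n
  have hp : P.T n = ((P.t n) ^ n).comp (P.t n) := by
    rw [Paracyclic.T, pow_succ, Module.End.mul_eq_comp]
  calc (P.s n n).comp (P.T n)
      = ((P.s n n).comp ((P.t n) ^ n)).comp (P.t n) := by
        rw [hp, LinearMap.comp_assoc]
    _ = ((-1 : k) ^ n) • (((P.t (n + 1)) ^ n).comp ((P.s n 0).comp (P.t n))) := by
        rw [h, LinearMap.smul_comp, LinearMap.comp_assoc]
    _ = ((-1 : k) ^ n) • ((-1 : k) ^ n) •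
          (((P.t (n + 1)) ^ n).comp ((P.t (n + 1)).comp ((P.t (n + 1)).comp (P.s n n)))) := by
        rw [hz, LinearMap.comp_smul]
    _ = (((P.t (n + 1)) ^ (n + 2)).comp (P.s n n)) := by
        rw [smul_smul, ← mul_pow]
        norm_num
        rw [← LinearMap.comp_assoc, ← Module.End.mul_eq_comp, ← pow_succ,
          ← LinearMap.comp_assoc, ← Module.End.mul_eq_comp, ← pow_succ]

lemma sextra_T (n : ℕ) :
    (P.sextra n).comp (P.T n) = (P.T (n + 1)).comp (P.sextra n) := by
  have h := s_nn_T P n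
  rw [Paracyclic.sextra, LinearMap.smul_comp, LinearMap.comp_smul, LinearMap.comp_assoc, h,
    Paracyclic.T]
  congr 1
  rw [← LinearMap.comp_assoc, ← Module.End.mul_eq_comp, ← pow_succ',
    ← LinearMap.comp_assoc, ← Module.End.mul_eq_comp, ← pow_succ]

end ParacyclicAux


/-- For every paracyclic `k`-module (`k` a field of characteristic zero)
one has `B_{n+1} B_n = (id - T_{n+2})(id - t_{n+2}) s_{n+1} s_n N_n` on `C_n` for every `n`,
where `s` denotes the extra degeneracies. -/
theorem connes_tsygan_B_squared (k : Type) [Field k] [CharZero k] (P : Paracyclic k) :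
    ∀ n : ℕ, (P.Bct (n + 1)).comp (P.Bct n) =
      (LinearMap.id - P.T (n + 2)).comp ((LinearMap.id - P.t (n + 2)).comp
        ((P.sextra (n + 1)).comp ((P.sextra n).comp (P.Nrm n)))) := by
  intro n
  have hN := ParacyclicAux.nrm_comp_sub P (n + 1)
  have hS : (P.sextra (n + 1)).comp (P.T (n + 1)) = (P.T (n + 2)).comp (P.sextra (n + 1)) :=
    ParacyclicAux.sextra_T P (n + 1)
  rw [Paracyclic.Bct, Paracyclic.Bct]
  calc ((LinearMap.id - P.t (n + 2)).comp ((P.sextra (n + 1)).comp (P.Nrm (n + 1)))).comp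
        ((LinearMap.id - P.t (n + 1)).comp ((P.sextra n).comp (P.Nrm n)))
      = (LinearMap.id - P.t (n + 2)).comp ((P.sextra (n + 1)).comp
          (((P.Nrm (n + 1)).comp (LinearMap.id - P.t (n + 1))).comp
            ((P.sextra n).comp (P.Nrm n)))) := by
        simp only [LinearMap.comp_assoc]
    _ = (LinearMap.id - P.t (n + 2)).comp ((P.sextra (n + 1)).comp
          ((LinearMap.id - P.T (n + 1)).comp ((P.sextra n).comp (P.Nrm n)))) := by rw [hN]
    _ = (LinearMap.id - P.T (n + 2)).comp ((LinearMap.id - P.t (n + 2)).comp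
        ((P.sextra (n + 1)).comp ((P.sextra n).comp (P.Nrm n)))) := by
        simp only [LinearMap.sub_comp, LinearMap.comp_sub, LinearMap.id_comp, LinearMap.comp_id,
          ← LinearMap.comp_assoc]
        have htT : (P.t (n + 2)).comp (P.T (n + 2)) = (P.T (n + 2)).comp (P.t (n + 2)) := by
          rw [Paracyclic.T, ← Module.End.mul_eq_comp, ← Module.End.mul_eq_comp, ← pow_succ',
            ← pow_succ]
        have h4 : ((P.t (n + 2)).comp (P.sextra (n + 1))).comp (P.T (n + 1))
            = ((P.T (n + 2)).comp (P.t (n + 2))).comp (P.sextra (n + 1)) := by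
          rw [LinearMap.comp_assoc, hS, ← LinearMap.comp_assoc, htT]
        rw [hS, h4]
        abel
end

section
/- Let C_• be a quasi-cyclic paracyclic k-module over a field k of characteristic zero, i.e. C_n = ker(id − T_n) ⊕ im(id − T_n) for all n, where T_n = t_n^{n+1}. Then the canonical projection of simplicial chain complexes (C_•, b_•) → (C_•^cyc, b_•), where C_•^cyc := C_• / im(id − T_•), is a quasi-isomorphism. -/
namespace Paracyclic

variable {k : Type} [Field k] (P : Paracyclic k)

/-- the associated cyclic module `C^cyc_n := C_n / im(id - T_n)` -/
noncomputable def Ccyc (n : ℕ) :=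
  P.C n ⧸ LinearMap.range (LinearMap.id - P.T n)

noncomputable instance (n : ℕ) : AddCommGroup (P.Ccyc n) := by
  unfold Ccyc; infer_instance

noncomputable instance (n : ℕ) : Module k (P.Ccyc n) := by
  unfold Ccyc; infer_instance

/-- the canonical projection `C_n → C^cyc_n` -/
noncomputable def proj (n : ℕ) : P.C n →ₗ[k] P.Ccyc n :=
  (LinearMap.range (LinearMap.id - P.T n)).mkQ

/-- A paracyclic module is *quasi-cyclic* if `C_n = ker(id - T_n) ⊕ im(id - T_n)` for all `n`. -/
def IsQuasiCyclic : Prop :=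
  ∀ n : ℕ, IsCompl (LinearMap.ker (LinearMap.id - P.T n))
    (LinearMap.range (LinearMap.id - P.T n))

end Paracyclic

namespace Paracyclic

open Finset

variable {k : Type} [Field k] (P : Paracyclic k)

theorem aux_sum_comp {M N L : Type} [AddCommGroup M] [Module k M] [AddCommGroup N]
    [Module k N] [AddCommGroup L] [Module k L]
    (s : Finset ℕ) (f : ℕ → (N →ₗ[k] L)) (g : M →ₗ[k] N) :
    (∑ i ∈ s, f i).comp g = ∑ i ∈ s, (f i).comp g := by
  ext x; simp [LinearMap.sum_apply]

theorem aux_comp_sum {M N L : Type} [AddCommGroup M] [Module k M] [AddCommGroup N]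
    [Module k N] [AddCommGroup L] [Module k L]
    (s : Finset ℕ) (f : ℕ → (M →ₗ[k] N)) (g : N →ₗ[k] L) :
    g.comp (∑ i ∈ s, f i) = ∑ i ∈ s, g.comp (f i) := by
  ext x; simp [LinearMap.sum_apply, map_sum]

theorem t_pow_succ (n j : ℕ) : (P.t n) ^ (j + 1) = ((P.t n) ^ j).comp (P.t n) := by
  rw [pow_succ]; rfl

theorem t_pow_add (n i j : ℕ) : (P.t n) ^ (i + j) = ((P.t n) ^ i).comp ((P.t n) ^ j) := by
  rw [pow_add]; rfl

theorem d_t_pow (n : ℕ) (j : ℕ) : ∀ m : ℕ, m + j ≤ n + 1 →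
    (P.d n (m + j)).comp ((P.t (n + 1)) ^ j)
      = ((-1 : k) ^ j) • (((P.t n) ^ j).comp (P.d n m)) := by
  induction j with
  | zero => intro m _; ext x; simp
  | succ j ih =>
    intro m h
    have h1 : m ≤ n := by omega
    have h2 : (m + 1) + j ≤ n + 1 := by omega
    have e1 : m + (j + 1) = (m + 1) + j := by omega
    rw [e1, t_pow_succ, ← LinearMap.comp_assoc, ih (m + 1) h2, LinearMap.smul_comp,
      LinearMap.comp_assoc, P.d_t n m h1, LinearMap.comp_neg, ← LinearMap.comp_assoc,
      ← t_pow_succ, pow_succ (-1 : k)]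
    rw [mul_neg_one, neg_smul]; simp

theorem d_T (n i : ℕ) (h : i ≤ n + 1) :
    (P.d n i).comp (P.T (n + 1)) = (P.T n).comp (P.d n i) := by
  obtain ⟨m, hm⟩ : ∃ m, i + m = n + 1 := ⟨n + 1 - i, by omega⟩
  have e1 : P.T (n + 1) = ((P.t (n + 1)) ^ i).comp ((P.t (n + 1)) ^ (m + 1)) := by
    rw [← t_pow_add]; unfold T; congr 1; omega
  have e2 : (P.t (n + 1)) ^ (m + 1) = (P.t (n + 1)).comp ((P.t (n + 1)) ^ m) := by
    rw [pow_succ']; rfl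
  have hd0 : (P.d n i) = P.d n (0 + i) := by rw [Nat.zero_add]
  have step1 : (P.d n i).comp ((P.t (n + 1)) ^ i)
      = ((-1 : k) ^ i) • (((P.t n) ^ i).comp (P.d n 0)) := by
    rw [hd0]; exact P.d_t_pow n i 0 (by omega)
  have step2 : (P.d n (n + 1)).comp ((P.t (n + 1)) ^ m)
      = ((-1 : k) ^ m) • (((P.t n) ^ m).comp (P.d n i)) := by
    have : P.d n (n + 1) = P.d n (i + m) := by rw [hm]
    rw [this]; exact P.d_t_pow n m i (by omega)
  rw [e1, ← LinearMap.comp_assoc, step1, LinearMap.smul_comp, LinearMap.comp_assoc, e2,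
    ← LinearMap.comp_assoc (f := (P.t (n+1)) ^ m), P.d_t_zero n, LinearMap.smul_comp,
    step2]
  simp only [LinearMap.comp_smul, smul_smul]
  have hs : (-1 : k) ^ i * ((-1 : k) ^ (n + 1) * (-1 : k) ^ m) = 1 := by
    rw [mul_comm ((-1 : k) ^ (n + 1)), ← mul_assoc, ← pow_add, hm, ← pow_add]
    exact Even.neg_one_pow ⟨n + 1, by ring⟩
  rw [hs, one_smul, ← LinearMap.comp_assoc, ← t_pow_add, hm]
  rfl

theorem b_T (n : ℕ) : (P.b n).comp (P.T (n + 1)) = (P.T n).comp (P.b n) := by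
  unfold b
  rw [aux_sum_comp, aux_comp_sum]
  refine Finset.sum_congr rfl fun i hi => ?_
  rw [LinearMap.smul_comp, LinearMap.comp_smul, P.d_T n i (by have := Finset.mem_range.mp hi; omega)]

end Paracyclic

namespace Paracyclic

open Finset

variable {k : Type} [Field k] (P : Paracyclic k)

/-- auxiliary low part -/
noncomputable def Faux (n j : ℕ) : P.C (n + 1) →ₗ[k] P.C n :=
  ∑ m ∈ Finset.range (n + 1 - j), ((-1 : k) ^ m) • (((P.t n) ^ j).comp (P.d n m))

/-- auxiliary high part -/
noncomputable def Gaux (n j : ℕ) : P.C (n + 1) →ₗ[k] P.C n :=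
  ∑ l ∈ Finset.range j, ((-1 : k) ^ (n + 1 - l)) • (((P.t n) ^ (j - 1)).comp (P.d n (n + 1 - l)))

theorem Faux_step (n j : ℕ) (hj : j ≤ n) :
    (P.Faux n j).comp (P.t (n + 1))
      = P.Faux n (j + 1) + ((-1 : k) ^ (n + 1)) • (((P.t n) ^ j).comp (P.d n (n + 1))) := by
  unfold Faux
  rw [aux_sum_comp]
  have hr : n + 1 - j = (n - j) + 1 := by omega
  rw [hr, Finset.sum_range_succ']
  congr 1
  · refine Finset.sum_congr (by congr 1; omega) fun m hm => ?_
    have hmn : m ≤ n := by have := Finset.mem_range.mp hm; omega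
    rw [LinearMap.smul_comp, LinearMap.comp_assoc, P.d_t n m hmn, LinearMap.comp_neg,
      ← LinearMap.comp_assoc, ← t_pow_succ, smul_neg, pow_succ (-1 : k), mul_neg_one, neg_smul,
      neg_neg]
  · simp only [pow_zero, one_smul, LinearMap.comp_assoc, P.d_t_zero n, LinearMap.comp_smul]

theorem Gaux_step (n j : ℕ) (hj : j ≤ n) :
    (P.Gaux n j).comp (P.t (n + 1))
        + ((-1 : k) ^ (n + 1)) • (((P.t n) ^ j).comp (P.d n (n + 1)))
      = P.Gaux n (j + 1) := by
  unfold Gaux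
  rw [aux_sum_comp, Finset.sum_range_succ']
  congr 1
  · refine Finset.sum_congr rfl fun l hl => ?_
    have hln : l ≤ n ∧ l + 1 ≤ j := by have := Finset.mem_range.mp hl; omega
    have e1 : n + 1 - l = (n - l) + 1 := by omega
    have e2 : n + 1 - (l + 1) = n - l := by omega
    rw [e1, e2, LinearMap.smul_comp, LinearMap.comp_assoc, P.d_t n (n - l) (by omega),
      LinearMap.comp_neg, ← LinearMap.comp_assoc, smul_neg]
    rcases Nat.exists_eq_add_of_le (show 1 ≤ j from by omega) with ⟨j', hj'⟩
    have e3 : j - 1 = j' := by omega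
    have e4 : j + 1 - 1 = j' + 1 := by omega
    rw [e3, e4, ← t_pow_succ, pow_succ (-1 : k), mul_neg_one, neg_smul, neg_neg]

theorem bprime_t_pow (n : ℕ) : ∀ j : ℕ, j ≤ n + 1 →
    (P.b' n).comp ((P.t (n + 1)) ^ j) = P.Faux n j + P.Gaux n j := by
  intro j
  induction j with
  | zero =>
    intro _
    have : P.Gaux n 0 = 0 := by unfold Gaux; simp
    rw [this, add_zero]
    unfold b' Faux
    rw [Nat.sub_zero]
    ext x; simp
  | succ j ih =>
    intro h
    have hj : j ≤ n := by omega
    rw [t_pow_succ, ← LinearMap.comp_assoc, ih (by omega), LinearMap.add_comp,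
      Faux_step P n j hj, ← Gaux_step P n j hj]
    abel

theorem t_pow_b (n : ℕ) (j : ℕ) (hj : j ≤ n) :
    ((P.t n) ^ j).comp (P.b n) = P.Faux n j + P.Gaux n (j + 1) := by
  unfold b
  rw [aux_comp_sum]
  have hr : n + 2 = (n + 1 - j) + (j + 1) := by omega
  rw [hr, Finset.sum_range_add]
  congr 1
  · refine Finset.sum_congr rfl fun m _ => ?_
    rw [LinearMap.comp_smul]
  · rw [show P.Gaux n (j + 1) = ∑ x ∈ Finset.range (j + 1), ((-1 : k) ^ (n + 1 - (j + 1 - 1 - x)))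
        • (((P.t n) ^ (j + 1 - 1)).comp (P.d n (n + 1 - (j + 1 - 1 - x))))
      from (Finset.sum_range_reflect _ (j + 1)).symm]
    refine Finset.sum_congr rfl fun x hx => ?_
    have hxj : x ≤ j := by have := Finset.mem_range.mp hx; omega
    simp only [Nat.add_sub_cancel]
    rw [show n + 1 - (j - x) = n + 1 - j + x by omega, LinearMap.comp_smul]

theorem Nrm_b (n : ℕ) :
    (P.Nrm n).comp (P.b n) = (P.b' n).comp (P.Nrm (n + 1)) := by
  unfold Nrm
  rw [aux_sum_comp, aux_comp_sum]
  have lhs : ∑ j ∈ Finset.range (n + 1), ((P.t n) ^ j).comp (P.b n)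
      = ∑ j ∈ Finset.range (n + 1), (P.Faux n j + P.Gaux n (j + 1)) := by
    refine Finset.sum_congr rfl fun j hj => ?_
    exact P.t_pow_b n j (by have := Finset.mem_range.mp hj; omega)
  have rhs : ∑ j ∈ Finset.range (n + 2), (P.b' n).comp ((P.t (n + 1)) ^ j)
      = ∑ j ∈ Finset.range (n + 2), (P.Faux n j + P.Gaux n j) := by
    refine Finset.sum_congr rfl fun j hj => ?_
    exact P.bprime_t_pow n j (by have := Finset.mem_range.mp hj; omega)
  rw [lhs, rhs, Finset.sum_add_distrib, Finset.sum_add_distrib]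
  have hF : P.Faux n (n + 1) = 0 := by unfold Faux; simp
  have hG : P.Gaux n 0 = 0 := by unfold Gaux; simp
  have hR1 : ∑ j ∈ Finset.range (n + 2), P.Faux n j = ∑ j ∈ Finset.range (n + 1), P.Faux n j := by
    rw [Finset.sum_range_succ, hF, add_zero]
  have hR2 : ∑ j ∈ Finset.range (n + 2), P.Gaux n j
      = ∑ j ∈ Finset.range (n + 1), P.Gaux n (j + 1) := by
    rw [Finset.sum_range_succ', hG, add_zero]
  rw [hR1, hR2]

end Paracyclic

namespace Paracyclic

open Finset

variable {k : Type} [Field k] (P : Paracyclic k)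

theorem b_zero_eq : P.b 0 = P.d 0 0 - P.d 0 1 := by
  unfold b
  rw [Finset.sum_range_succ, Finset.sum_range_succ, Finset.sum_range_zero]
  simp [sub_eq_add_neg]

theorem contraction_zero : (P.b 0).comp (P.sextra 0) = LinearMap.id - P.t 0 := by
  have hs : P.sextra 0 = -((P.t 1).comp (P.s 0 0)) := by
    unfold sextra; rw [pow_one, neg_one_smul]
  rw [P.b_zero_eq, hs, LinearMap.comp_neg, LinearMap.sub_comp,
    ← LinearMap.comp_assoc, ← LinearMap.comp_assoc, P.d_t_zero 0, P.d_t 0 0 (le_refl 0),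
    pow_one, neg_one_smul, LinearMap.neg_comp, LinearMap.neg_comp,
    P.d_s_succ 0 0 (le_refl 0), LinearMap.comp_assoc, P.d_s_self 0 0 (le_refl 0),
    LinearMap.comp_id]
  abel

theorem b_comp_sextra (n : ℕ) :
    (P.b (n + 1)).comp (P.sextra (n + 1))
      = LinearMap.id - P.t (n + 1)
        + ((-1 : k) ^ (n + 2)) • ((P.t (n + 1)).comp ((P.s n n).comp (P.b' n))) := by
  unfold b sextra
  rw [LinearMap.comp_smul, aux_sum_comp, Finset.sum_range_succ, Finset.sum_range_succ']
  have f0 : (((-1 : k) ^ 0 • P.d (n + 1) 0).comp ((P.t (n + 2)).comp (P.s (n + 1) (n + 1))))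
      = ((-1 : k) ^ (n + 2)) • LinearMap.id := by
    rw [pow_zero, one_smul, ← LinearMap.comp_assoc, P.d_t_zero (n + 1), LinearMap.smul_comp,
      P.d_s_succ (n + 1) (n + 1) (le_refl _)]
  have ftop : (((-1 : k) ^ (n + 2) • P.d (n + 1) (n + 2)).comp
        ((P.t (n + 2)).comp (P.s (n + 1) (n + 1))))
      = ((-1 : k) ^ (n + 3)) • P.t (n + 1) := by
    rw [LinearMap.smul_comp, ← LinearMap.comp_assoc, P.d_t (n + 1) (n + 1) (le_refl _),
      LinearMap.neg_comp, LinearMap.comp_assoc, P.d_s_self (n + 1) (n + 1) (le_refl _),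
      LinearMap.comp_id, smul_neg, pow_succ (-1 : k) (n + 2), mul_neg_one, neg_smul]
  have fmid : ∀ m, m ≤ n →
      (((-1 : k) ^ (m + 1) • P.d (n + 1) (m + 1)).comp
          ((P.t (n + 2)).comp (P.s (n + 1) (n + 1))))
        = (P.t (n + 1)).comp ((P.s n n).comp (((-1 : k) ^ m) • P.d n m)) := by
    intro m hm
    rw [LinearMap.smul_comp, ← LinearMap.comp_assoc, P.d_t (n + 1) m (by omega),
      LinearMap.neg_comp, LinearMap.comp_assoc, P.d_s_le n m n hm (le_refl n),
      pow_succ (-1 : k) m, mul_neg_one, neg_smul, smul_neg, neg_neg,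
      LinearMap.comp_smul, LinearMap.comp_smul]
  have hmidsum : (∑ m ∈ Finset.range (n + 1),
        (((-1 : k) ^ (m + 1) • P.d (n + 1) (m + 1)).comp
          ((P.t (n + 2)).comp (P.s (n + 1) (n + 1)))))
      = (P.t (n + 1)).comp ((P.s n n).comp (P.b' n)) := by
    unfold b'
    rw [aux_comp_sum, aux_comp_sum]
    refine Finset.sum_congr rfl fun m hm => fmid m (by have := Finset.mem_range.mp hm; omega)
  rw [hmidsum, f0, ftop, smul_add, smul_add, smul_smul, smul_smul, ← pow_add, ← pow_add,
    Even.neg_one_pow (⟨n + 2, by ring⟩ : Even ((n + 2) + (n + 2))), one_smul,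
    Odd.neg_one_pow (⟨n + 2, by ring⟩ : Odd ((n + 2) + (n + 3))), neg_one_smul]
  abel

theorem contraction_succ (n : ℕ) :
    (P.b (n + 1)).comp (P.sextra (n + 1)) + (P.sextra n).comp (P.b' n)
      = LinearMap.id - P.t (n + 1) := by
  rw [P.b_comp_sextra n]
  have hs : (P.sextra n).comp (P.b' n)
      = ((-1 : k) ^ (n + 1)) • ((P.t (n + 1)).comp ((P.s n n).comp (P.b' n))) := by
    unfold sextra
    rw [LinearMap.smul_comp, LinearMap.comp_assoc]
  rw [hs, add_assoc, ← add_smul, pow_succ (-1 : k) (n + 1), mul_neg_one, neg_add_cancel,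
    zero_smul, add_zero]

theorem one_sub_t_comp_Nrm (n : ℕ) :
    (LinearMap.id - P.t n).comp (P.Nrm n) = LinearMap.id - P.T n := by
  have h1 : (LinearMap.id - P.t n).comp (P.Nrm n) = (1 - P.t n) * (P.Nrm n) := rfl
  have h2 : (LinearMap.id : P.C n →ₗ[k] P.C n) - P.T n = 1 - (P.t n) ^ (n + 1) := rfl
  rw [h1, h2]
  unfold Nrm
  rw [← neg_sub (P.t n) 1, neg_mul, mul_geom_sum, neg_sub]

theorem homotopy_succ (n : ℕ) :
    (P.b (n + 1)).comp ((P.sextra (n + 1)).comp (P.Nrm (n + 1)))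
      + ((P.sextra n).comp (P.Nrm n)).comp (P.b n)
      = LinearMap.id - P.T (n + 1) := by
  rw [← LinearMap.comp_assoc, LinearMap.comp_assoc (P.b n) (P.Nrm n) (P.sextra n), P.Nrm_b n,
    ← LinearMap.comp_assoc, ← LinearMap.add_comp, P.contraction_succ n, P.one_sub_t_comp_Nrm]

theorem homotopy_zero :
    (P.b 0).comp ((P.sextra 0).comp (P.Nrm 0)) = LinearMap.id - P.T 0 := by
  have hN : P.Nrm 0 = LinearMap.id := by
    unfold Nrm; rw [Finset.sum_range_one, pow_zero]; rfl
  have hT : P.T 0 = P.t 0 := by unfold T; rw [pow_one]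
  rw [hN, LinearMap.comp_id, hT, P.contraction_zero]

end Paracyclic

/-- Let `C_•` be a quasi-cyclic paracyclic `k`-module over a field `k` of
characteristic zero, i.e. `C_n = ker(id - T_n) ⊕ im(id - T_n)` for all `n`.  Then the canonical
projection of simplicial chain complexes `(C_•, b_•) → (C_•^cyc, b_•)`, where
`C_•^cyc := C_• / im(id - T_•)`, is a quasi-isomorphism.

The boundary of the quotient complex is quantified as any family `bq` of linear maps compatible
with the projections (such a family exists and is unique, since the projections are surjective and
`b_•` preserves `im(id - T_•)`), and the quasi-isomorphism property is spelled out elementwise: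
the maps induced on homology by the projection are injective and surjective in every degree. -/
theorem projection_to_cyclic_quotient_is_quasi_iso (k : Type) [Field k] [CharZero k]
    (P : Paracyclic k) (hqc : P.IsQuasiCyclic)
    (bq : ∀ n : ℕ, P.Ccyc (n + 1) →ₗ[k] P.Ccyc n)
    (hbq : ∀ n : ℕ, (bq n).comp (P.proj (n + 1)) = (P.proj n).comp (P.b n)) :
    -- injectivity on homology:
    (∀ z : P.C 0, (∃ w : P.Ccyc 1, bq 0 w = P.proj 0 z) → ∃ w : P.C 1, P.b 0 w = z) ∧
    (∀ (n : ℕ) (z : P.C (n + 1)), P.b n z = 0 →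
      (∃ w : P.Ccyc (n + 2), bq (n + 1) w = P.proj (n + 1) z) →
        ∃ w : P.C (n + 2), P.b (n + 1) w = z) ∧
    -- surjectivity on homology:
    (∀ y : P.Ccyc 0, ∃ z : P.C 0, ∃ w : P.Ccyc 1, bq 0 w = P.proj 0 z - y) ∧
    (∀ (n : ℕ) (y : P.Ccyc (n + 1)), bq n y = 0 →
      ∃ z : P.C (n + 1), P.b n z = 0 ∧
        ∃ w : P.Ccyc (n + 2), bq (n + 1) w = P.proj (n + 1) z - y) := by
  
  classical
  -- notation
  have hproj : ∀ (n : ℕ) (x : P.C n),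
      P.proj n x = 0 ↔ x ∈ LinearMap.range (LinearMap.id - P.T n) := by
    intro n x
    unfold Paracyclic.proj
    exact Submodule.Quotient.mk_eq_zero _
  have hsurj : ∀ n : ℕ, Function.Surjective (P.proj n) := fun n =>
    Submodule.mkQ_surjective _
  have hbsub : ∀ (n : ℕ) (x : P.C (n + 1)),
      P.b n (((LinearMap.id - P.T (n + 1)) : P.C (n + 1) →ₗ[k] P.C (n + 1)) x)
        = ((LinearMap.id - P.T n : P.C n →ₗ[k] P.C n)) (P.b n x) := by
    intro n x
    have h := LinearMap.ext_iff.mp (P.b_T n) x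
    simp only [LinearMap.comp_apply] at h
    simp [map_sub, h]
  have hbI : ∀ (n : ℕ) (x : P.C (n + 1)),
      x ∈ LinearMap.range (LinearMap.id - P.T (n + 1)) →
        P.b n x ∈ LinearMap.range (LinearMap.id - P.T n) := by
    rintro n x ⟨y, rfl⟩
    exact ⟨P.b n y, (hbsub n y).symm⟩
  have hbK : ∀ (n : ℕ) (x : P.C (n + 1)),
      x ∈ LinearMap.ker (LinearMap.id - P.T (n + 1)) →
        P.b n x ∈ LinearMap.ker (LinearMap.id - P.T n) := by
    intro n x hx
    rw [LinearMap.mem_ker] at hx ⊢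
    rw [← hbsub n x, hx, map_zero]
  have hdec : ∀ (n : ℕ) (x : P.C n),
      ∃ xk ∈ LinearMap.ker (LinearMap.id - P.T n),
        ∃ xi ∈ LinearMap.range (LinearMap.id - P.T n), xk + xi = x := fun n x =>
    by obtain ⟨xk, xi, hk, hi, h⟩ := Submodule.codisjoint_iff_exists_add_eq.mp (hqc n).codisjoint x
       exact ⟨xk, hk, xi, hi, h⟩
  have hdisj : ∀ (n : ℕ) (x : P.C n),
      x ∈ LinearMap.ker (LinearMap.id - P.T n) →
        x ∈ LinearMap.range (LinearMap.id - P.T n) → x = 0 := fun n =>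
    Submodule.disjoint_def.mp (hqc n).disjoint
  -- acyclicity of the subcomplex im(id - T)
  have acyclic0 : ∀ x : P.C 0, x ∈ LinearMap.range (LinearMap.id - P.T 0) →
      ∃ w : P.C 1, P.b 0 w = x := by
    rintro x ⟨c, rfl⟩
    refine ⟨P.sextra 0 (P.Nrm 0 c), ?_⟩
    have h := LinearMap.ext_iff.mp P.homotopy_zero c
    simpa using h
  have acyclicS : ∀ (n : ℕ) (x : P.C (n + 1)),
      x ∈ LinearMap.range (LinearMap.id - P.T (n + 1)) → P.b n x = 0 →
        ∃ w : P.C (n + 2), P.b (n + 1) w = x := by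
    rintro n x ⟨c, rfl⟩ hbx
    obtain ⟨ck, hck, ci, hci, hsum⟩ := hdec (n + 1) c
    have hx' : ((LinearMap.id - P.T (n + 1) : P.C (n + 1) →ₗ[k] P.C (n + 1))) c
        = ((LinearMap.id - P.T (n + 1) : P.C (n + 1) →ₗ[k] P.C (n + 1))) ci := by
      rw [← hsum, map_add, LinearMap.mem_ker.mp hck, zero_add]
    have h1 : P.b n ci ∈ LinearMap.ker (LinearMap.id - P.T n) := by
      rw [LinearMap.mem_ker, ← hbsub n ci, ← hx', hbx]
    have h3 : P.b n ci = 0 := hdisj n _ h1 (hbI n ci hci)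
    refine ⟨P.sextra (n + 1) (P.Nrm (n + 1) ci), ?_⟩
    have hh := LinearMap.ext_iff.mp (P.homotopy_succ n) ci
    simp only [LinearMap.add_apply, LinearMap.comp_apply, h3, map_zero, add_zero] at hh
    rw [hx']
    simpa using hh
  refine ⟨?_, ?_, ?_, ?_⟩
  · -- injectivity, degree 0
    rintro z ⟨w, hw⟩
    obtain ⟨u, rfl⟩ := hsurj 1 w
    have h := LinearMap.ext_iff.mp (hbq 0) u
    simp only [LinearMap.comp_apply] at h
    have hmem : z - P.b 0 u ∈ LinearMap.range (LinearMap.id - P.T 0) := by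
      rw [← hproj 0, map_sub, ← h, hw, sub_self]
    obtain ⟨v, hv⟩ := acyclic0 _ hmem
    exact ⟨u + v, by rw [map_add, hv]; abel⟩
  · -- injectivity, positive degrees
    rintro n z hz ⟨w, hw⟩
    obtain ⟨u, rfl⟩ := hsurj (n + 2) w
    have h := LinearMap.ext_iff.mp (hbq (n + 1)) u
    simp only [LinearMap.comp_apply] at h
    have hmem : z - P.b (n + 1) u ∈ LinearMap.range (LinearMap.id - P.T (n + 1)) := by
      rw [← hproj (n + 1), map_sub, ← h, hw, sub_self]
    obtain ⟨zk, hzk, zi, hzi, hzsum⟩ := hdec (n + 1) z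
    obtain ⟨uk, huk, ui, hui, husum⟩ := hdec (n + 2) u
    have hbu : P.b (n + 1) u = P.b (n + 1) uk + P.b (n + 1) ui := by
      rw [← map_add, husum]
    have key1 : zk - P.b (n + 1) uk = 0 := by
      refine hdisj (n + 1) _ (Submodule.sub_mem _ hzk (hbK (n + 1) uk huk)) ?_
      have he : zk - P.b (n + 1) uk
          = (z - P.b (n + 1) u) - zi + P.b (n + 1) ui := by
        rw [hbu, ← hzsum]; abel
      rw [he]
      exact Submodule.add_mem _ (Submodule.sub_mem _ hmem hzi) (hbI (n + 1) ui hui)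
    have key2 : P.b n zi = 0 := by
      refine hdisj n _ ?_ (hbI n zi hzi)
      have he : P.b n zi = 0 - P.b n zk := by
        rw [← hz, ← hzsum, map_add]; abel
      rw [he, zero_sub]
      exact Submodule.neg_mem _ (hbK n zk hzk)
    obtain ⟨v, hv⟩ := acyclicS n zi hzi key2
    refine ⟨uk + v, ?_⟩
    rw [map_add, hv, ← sub_eq_zero]
    rw [← hzsum]
    rw [sub_eq_zero] at key1
    rw [← key1]
    abel
  · -- surjectivity, degree 0
    intro y
    obtain ⟨z, rfl⟩ := hsurj 0 y
    exact ⟨z, 0, by rw [map_zero, sub_self]⟩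
  · -- surjectivity, positive degrees
    rintro n y hy
    obtain ⟨z0, rfl⟩ := hsurj (n + 1) y
    have h := LinearMap.ext_iff.mp (hbq n) z0
    simp only [LinearMap.comp_apply] at h
    have hmem : P.b n z0 ∈ LinearMap.range (LinearMap.id - P.T n) := by
      rw [← hproj n, ← h, hy]
    obtain ⟨zk, hzk, zi, hzi, hzsum⟩ := hdec (n + 1) z0
    have key : P.b n zk = 0 := by
      refine hdisj n _ (hbK n zk hzk) ?_
      have he : P.b n zk = P.b n z0 - P.b n zi := by rw [← hzsum, map_add]; abel
      rw [he]
      exact Submodule.sub_mem _ hmem (hbI n zi hzi)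
    refine ⟨zk, key, 0, ?_⟩
    rw [map_zero, eq_comm, sub_eq_zero, ← sub_eq_zero, ← map_sub, hproj]
    have he : zk - z0 = -zi := by rw [← hzsum]; abel
    rw [he]
    exact Submodule.neg_mem _ hzi
end
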